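/- Let F₂ be the free group on two generators with word metric d. Let x₀, x₀', y ∈ F₂ satisfy d(x₀,y) + d(y,x₀') > d(x₀,x₀') (that is, y does not lie on the geodesic from x₀ to x₀'). Then for every r ∈ ℕ the flowers with respect to the two base points coincide: Fl_{x₀}(y,r) = Fl_{x₀'}(y,r). -/

import Mathlib

open FreeGroup

/-- Two letters are compatible if they do not cancel when adjacent. -/
private def Compat (p q : Fin 2 × Bool) : Prop := ¬(p.1 = q.1 ∧ p.2 = !q.2)

private lemma reduce_eq_self_iff (L : List (Fin 2 × Bool)) :
    FreeGroup.reduce L = L ↔ List.Chain' Compat L := by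
  constructor
  · intro h
    induction L with
    | nil => exact List.isChain_nil
    | cons a L ih =>
      rw [FreeGroup.reduce.cons] at h
      rcases hL : FreeGroup.reduce L with _ | ⟨hd, tl⟩
      · rw [hL] at h
        simp only [] at h
        have : L = [] := by
          have := congrArg List.length h; simpa using this.symm
        subst this; exact List.isChain_singleton _
      · rw [hL] at h
        simp only [] at h
        by_cases hc : a.1 = hd.1 ∧ a.2 = !hd.2
        · rw [if_pos hc] at h
          have hlen : (FreeGroup.reduce L).length ≤ L.length :=
            FreeGroup.Red.length_le (FreeGroup.reduce.red)
          rw [hL] at hlen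
          have := congrArg List.length h
          simp at this hlen; omega
        · rw [if_neg hc] at h
          have hL' : L = hd :: tl := by
            have := congrArg List.tail h; simpa using this.symm
          have hred : FreeGroup.reduce L = L := by rw [hL, hL']
          have := ih hred
          rw [hL'] at this ⊢
          exact List.IsChain.cons_cons hc this
  · intro h
    induction L with
    | nil => rfl
    | cons a L ih =>
      rcases hL : L with _ | ⟨b, t⟩
      · rfl
      · subst hL
        have h1 : Compat a b := (List.isChain_cons_cons.mp h).1
        have h2 : List.Chain' Compat (b :: t) := (List.isChain_cons_cons.mp h).2
        have := ih h2
        rw [FreeGroup.reduce.cons, this]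
        simp only []
        rw [if_neg h1]

private lemma chain'_toWord (a : FreeGroup (Fin 2)) : List.Chain' Compat a.toWord :=
  (reduce_eq_self_iff _).mp a.reduce_toWord

private lemma norm_mul_eq_of_compat (a b : FreeGroup (Fin 2))
    (h : ∀ x ∈ a.toWord.getLast?, ∀ y ∈ b.toWord.head?, Compat x y) :
    FreeGroup.norm (a * b) = FreeGroup.norm a + FreeGroup.norm b := by
  have h1 : a * b = FreeGroup.mk (a.toWord ++ b.toWord) := by
    rw [← FreeGroup.mul_mk, FreeGroup.mk_toWord, FreeGroup.mk_toWord]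
  have h2 : FreeGroup.reduce (a.toWord ++ b.toWord) = a.toWord ++ b.toWord :=
    (reduce_eq_self_iff _).mpr (List.isChain_append.mpr ⟨chain'_toWord a, chain'_toWord b, h⟩)
  rw [h1]
  simp [FreeGroup.norm, FreeGroup.toWord_mk, h2]

private lemma cancel_of_norm_mul_lt (a b : FreeGroup (Fin 2))
    (h : FreeGroup.norm (a * b) < FreeGroup.norm a + FreeGroup.norm b) :
    ∃ x ∈ a.toWord.getLast?, ∃ y ∈ b.toWord.head?, x.1 = y.1 ∧ x.2 = !y.2 := by
  by_contra hc
  push_neg at hc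
  have := norm_mul_eq_of_compat a b (fun x hx y hy => fun ⟨e1, e2⟩ => hc x hx y hy e1 e2)
  omega

private lemma norm_mul_lt_of_cancel (a b : FreeGroup (Fin 2)) {x y : Fin 2 × Bool}
    (hx : x ∈ a.toWord.getLast?) (hy : y ∈ b.toWord.head?)
    (e1 : x.1 = y.1) (e2 : x.2 = !y.2) :
    FreeGroup.norm (a * b) < FreeGroup.norm a + FreeGroup.norm b := by
  have hA : a.toWord.dropLast ++ [x] = a.toWord := List.dropLast_append_getLast? _ hx
  have hB : b.toWord = y :: b.toWord.tail := by
    cases hBw : b.toWord with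
    | nil => rw [hBw] at hy; simp at hy
    | cons z t => rw [hBw] at hy; simp at hy; simp [hy]
  set A := a.toWord.dropLast
  set B := b.toWord.tail
  have hy2 : y = (x.1, !x.2) := Prod.ext e1.symm (by rw [e2]; simp)
  have hmk : a * b = FreeGroup.mk ((A ++ [x]) ++ (y :: B)) := by
    rw [← FreeGroup.mul_mk, hA, ← hB, FreeGroup.mk_toWord, FreeGroup.mk_toWord]
  have hstep : FreeGroup.Red.Step ((A ++ [x]) ++ (y :: B)) (A ++ B) := by
    have : (A ++ [x]) ++ (y :: B) = A ++ (x.1, x.2) :: (x.1, !x.2) :: B := by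
      rw [hy2]; simp
    rw [this]
    exact FreeGroup.Red.Step.not
  have hq : FreeGroup.mk ((A ++ [x]) ++ (y :: B)) = FreeGroup.mk (A ++ B) :=
    FreeGroup.reduce.exact (FreeGroup.reduce.Step.eq hstep)
  have hle : FreeGroup.norm (a * b) ≤ (A ++ B).length := by
    rw [hmk, hq]; exact FreeGroup.norm_mk_le
  have hna : FreeGroup.norm a = A.length + 1 := by
    show a.toWord.length = _
    rw [← hA]; simp
  have hnb : FreeGroup.norm b = B.length + 1 := by
    show b.toWord.length = _
    rw [hB]; simp
  simp only [List.length_append] at hle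
  omega

private lemma key (w a b : FreeGroup (Fin 2))
    (hab : FreeGroup.norm (a⁻¹ * b) < FreeGroup.norm a + FreeGroup.norm b)
    (hwa : FreeGroup.norm (w * a) = FreeGroup.norm w + FreeGroup.norm a) :
    FreeGroup.norm (w * b) = FreeGroup.norm w + FreeGroup.norm b := by
  have hab' : FreeGroup.norm (a⁻¹ * b) < FreeGroup.norm a⁻¹ + FreeGroup.norm b := by
    rw [FreeGroup.norm_inv_eq]; exact hab
  obtain ⟨x, hx, y, hy, e1, e2⟩ := cancel_of_norm_mul_lt a⁻¹ b hab'
  -- `x` is the inverse of the first letter of `a`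
  have hinv : (a⁻¹).toWord.getLast? = a.toWord.head?.map (fun p => (p.1, !p.2)) := by
    rw [FreeGroup.toWord_inv, FreeGroup.invRev]
    rw [List.getLast?_reverse, List.head?_map]
  rw [hinv] at hx
  obtain ⟨p, hp, hpx⟩ := Option.mem_map.mp hx
  -- the first letters of `a` and `b` coincide
  have hpy : p = y := by
    rw [← hpx] at e1 e2
    exact Prod.ext e1 (Bool.not_inj e2)
  rw [hpy] at hp
  -- now conclude
  apply norm_mul_eq_of_compat
  intro u hu v hv
  have hvy : v = y := by rw [hy] at hv; simpa using hv.symm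
  subst hvy
  rintro ⟨f1, f2⟩
  have := norm_mul_lt_of_cancel w a hu hp f1 f2
  omega

/-- The left-invariant word metric on the free group on two generators. -/
def wordDist (g h : FreeGroup (Fin 2)) : ℕ := FreeGroup.norm (g⁻¹ * h)

/-- The flower `Fl_x(y,r)`: the set of points at distance `r` from `y` whose geodesic to `x`
passes through `y`. -/
def flower (x y : FreeGroup (Fin 2)) (r : ℕ) : Set (FreeGroup (Fin 2)) :=
  {v | wordDist v y = r ∧ wordDist v x = r + wordDist y x}

private lemma wordDist_comm (g h : FreeGroup (Fin 2)) : wordDist g h = wordDist h g := by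
  unfold wordDist
  rw [← FreeGroup.norm_inv_eq]
  congr 1
  group

private lemma flower_subset (x₀ x₀' y : FreeGroup (Fin 2))
    (hy : wordDist x₀ x₀' < wordDist x₀ y + wordDist y x₀') (r : ℕ) :
    flower x₀ y r ⊆ flower x₀' y r := by
  rintro v ⟨h1, h2⟩
  refine ⟨h1, ?_⟩
  set a := y⁻¹ * x₀ with ha
  set b := y⁻¹ * x₀' with hb
  set w := v⁻¹ * y with hw
  have e0 : wordDist y x₀ = FreeGroup.norm a := rfl
  have e0' : wordDist y x₀' = FreeGroup.norm b := rfl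
  have e1 : wordDist x₀ x₀' = FreeGroup.norm (a⁻¹ * b) := by
    unfold wordDist; congr 1; rw [ha, hb]; group
  have e2 : wordDist x₀ y = FreeGroup.norm a := by
    unfold wordDist
    rw [← FreeGroup.norm_inv_eq]
    congr 1; rw [ha]; group
  have e3 : wordDist v x₀ = FreeGroup.norm (w * a) := by
    unfold wordDist; congr 1; rw [hw, ha]; group
  have e4 : wordDist v y = FreeGroup.norm w := rfl
  have e5 : wordDist v x₀' = FreeGroup.norm (w * b) := by
    unfold wordDist; congr 1; rw [hw, hb]; group
  rw [e1, e2, e0'] at hy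
  rw [e3, e0] at h2
  rw [e4] at h1
  rw [e5, e0', ← h1]
  exact key w a b hy (by rw [h2, h1])

/-- **Base change for flowers off the geodesic.**
If `y` does not lie on the geodesic from `x₀` to `x₀'`, then for every `r` the flowers
based at `y` with respect to the two base points coincide: `Fl_{x₀}(y,r) = Fl_{x₀'}(y,r)`. -/
theorem flower_base_change_off_geodesic (x₀ x₀' y : FreeGroup (Fin 2))
    (hy : wordDist x₀ x₀' < wordDist x₀ y + wordDist y x₀') (r : ℕ) :
    flower x₀ y r = flower x₀' y r := by
  have hy' : wordDist x₀' x₀ < wordDist x₀' y + wordDist y x₀ := by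
    rw [wordDist_comm x₀' x₀, wordDist_comm x₀' y, wordDist_comm y x₀]
    omega
  exact Set.Subset.antisymm (flower_subset x₀ x₀' y hy r) (flower_subset x₀' x₀ y hy' r)
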